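/- The number of acyclic orientations of the complete bipartite graph K_{n₁,n₂} equals ∑_{k=1}^{min(n₁,n₂)+1} ((k−1)!)² · S(n₁+1,k) · S(n₂+1,k), where S denotes the Stirling numbers of the second kind. -/

import Mathlib

/-- An orientation of a simple graph `G`, encoded as a function `f` where `f u v = true`
means the edge `{u,v}` is directed from `u` to `v`. Every edge gets exactly one direction,
and non-edges carry no direction. -/
def IsOrientation {V : Type*} (G : SimpleGraph V) (f : V → V → Bool) : Prop :=
  (∀ u v, G.Adj u v → f u v = !f v u) ∧ ∀ u v, ¬ G.Adj u v → f u v = false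

/-- The directed graph given by `f` contains no directed cycle. -/
def OrientAcyclic {V : Type*} (f : V → V → Bool) : Prop :=
  ∀ v, ¬ Relation.TransGen (fun a b => f a b = true) v v

/-- The number of acyclic orientations of `G`. -/
noncomputable def numAcyclicOrientations {V : Type*} (G : SimpleGraph V) : ℕ :=
  Nat.card {f : V → V → Bool // IsOrientation G f ∧ OrientAcyclic f}

/-- The Stirling number of the second kind `S(n,k)`: the number of partitions of an
`n`-element set into `k` non-empty parts. -/
noncomputable def stirling2 (n k : ℕ) : ℕ :=
  Nat.card {P : Finpartition (Finset.univ : Finset (Fin n)) // P.parts.card = k}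

open Finset Function Relation

section StepB
variable {n₁ n₂ : ℕ}

def Sa (o : Fin n₁ → Fin n₂ → Bool) (a : Fin n₁) : Finset (Fin n₂) :=
  univ.filter (fun b => o a b = true)

def ChainCond (o : Fin n₁ → Fin n₂ → Bool) : Prop :=
  ∀ a a', Sa o a ⊆ Sa o a' ∨ Sa o a' ⊆ Sa o a

lemma mem_Sa {o : Fin n₁ → Fin n₂ → Bool} {a : Fin n₁} {b : Fin n₂} :
    b ∈ Sa o a ↔ o a b = true := by simp [Sa]

def Iset (o : Fin n₁ → Fin n₂ → Bool) : Finset (Finset (Fin n₂)) :=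
  (univ.image (Sa o)).erase ∅

def PS (n k : ℕ) : Type :=
  {h : Fin (n+1) → Fin (k+1) // Function.Surjective h ∧ h (Fin.last n) = 0}

def oOf (k : ℕ) (f : Fin (n₁+1) → Fin (k+1)) (g : Fin (n₂+1) → Fin (k+1)) :
    Fin n₁ → Fin n₂ → Bool :=
  fun a b => decide (k+1 ≤ (f a.castSucc : ℕ) + (g b.castSucc : ℕ))

def Vnat (k : ℕ) (g : Fin (n₂+1) → Fin (k+1)) (j : ℕ) : Finset (Fin n₂) :=
  univ.filter (fun b => k+1 ≤ j + (g b.castSucc : ℕ))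

variable {k : ℕ} {f : Fin (n₁+1) → Fin (k+1)} {g : Fin (n₂+1) → Fin (k+1)}

lemma mem_Vnat {j : ℕ} {b : Fin n₂} :
    b ∈ Vnat k g j ↔ k+1 ≤ j + (g b.castSucc : ℕ) := by simp [Vnat]

lemma Sa_oOf (a : Fin n₁) : Sa (oOf k f g) a = Vnat k g (f a.castSucc : ℕ) := by
  ext b; simp [Sa, oOf, Vnat]

lemma Vnat_mono {j j' : ℕ} (h : j ≤ j') : Vnat k g j ⊆ Vnat k g j' := by
  intro b hb; rw [mem_Vnat] at hb ⊢; omega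

lemma Vnat_strict (hg : Function.Surjective g) (hg0 : g (Fin.last n₂) = 0)
    {j j' : ℕ} (h : j < j') (h' : j' ≤ k) :
    ∃ b, b ∈ Vnat k g j' ∧ b ∉ Vnat k g j := by
  obtain ⟨i, hi⟩ := hg ⟨k+1-j', by omega⟩
  have hival : (g i : ℕ) = k+1-j' := by rw [hi]
  have hine : i ≠ Fin.last n₂ := by
    intro he; rw [he, hg0] at hival; simp at hival; omega
  obtain ⟨b, hb⟩ := Fin.exists_castSucc_eq.mpr hine
  refine ⟨b, ?_, ?_⟩
  · rw [mem_Vnat, hb, hival]; omega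
  · rw [mem_Vnat, hb, hival]; omega

lemma Vnat_subset_iff (hg : Function.Surjective g) (hg0 : g (Fin.last n₂) = 0)
    {j j' : ℕ} (hj : j ≤ k) (hj' : j' ≤ k) :
    Vnat k g j ⊆ Vnat k g j' ↔ j ≤ j' := by
  constructor
  · intro hsub
    by_contra hlt
    push_neg at hlt
    obtain ⟨b, hb1, hb2⟩ := Vnat_strict hg hg0 hlt hj
    exact hb2 (hsub hb1)
  · exact Vnat_mono

lemma Vnat_injOn (hg : Function.Surjective g) (hg0 : g (Fin.last n₂) = 0) :
    Set.InjOn (Vnat k g) (Finset.Icc 1 k) := by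
  intro j hj j' hj' he
  simp only [coe_Icc, Set.mem_Icc] at hj hj'
  have h1 : j ≤ j' := (Vnat_subset_iff hg hg0 hj.2 hj'.2).1 (le_of_eq he)
  have h2 : j' ≤ j := (Vnat_subset_iff hg hg0 hj'.2 hj.2).1 (le_of_eq he.symm)
  omega

lemma Vnat_zero : Vnat k g 0 = ∅ := by
  ext b
  simp only [mem_Vnat, notMem_empty, iff_false]
  have := (g b.castSucc).is_le
  omega

lemma Vnat_nonempty (hg : Function.Surjective g) (hg0 : g (Fin.last n₂) = 0)
    {j : ℕ} (h1 : 1 ≤ j) (h2 : j ≤ k) : (Vnat k g j).Nonempty := by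
  obtain ⟨b, hb, -⟩ := Vnat_strict hg hg0 (show 0 < j by omega) h2
  exact ⟨b, hb⟩

lemma chainCond_oOf : ChainCond (oOf k f g) := by
  intro a a'
  rcases le_total ((f a.castSucc : ℕ)) ((f a'.castSucc : ℕ)) with h | h
  · left; rw [Sa_oOf, Sa_oOf]; exact Vnat_mono h
  · right; rw [Sa_oOf, Sa_oOf]; exact Vnat_mono h

lemma Iset_oOf (hf : Function.Surjective f) (hf0 : f (Fin.last n₁) = 0)
    (hg : Function.Surjective g) (hg0 : g (Fin.last n₂) = 0) :
    Iset (oOf k f g) = (Finset.Icc 1 k).image (Vnat k g) := by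
  ext T
  simp only [Iset, mem_erase, mem_image, mem_univ, true_and, exists_prop, mem_Icc]
  constructor
  · rintro ⟨hne, a, rfl⟩
    rw [Sa_oOf]
    refine ⟨(f a.castSucc : ℕ), ⟨?_, (f a.castSucc).is_le⟩, rfl⟩
    by_contra h0
    push_neg at h0
    have : (f a.castSucc : ℕ) = 0 := by omega
    rw [Sa_oOf, this, Vnat_zero] at hne
    exact hne rfl
  · rintro ⟨j, ⟨hj1, hj2⟩, rfl⟩
    constructor
    · intro he
      obtain ⟨b, hb⟩ := Vnat_nonempty hg hg0 hj1 hj2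
      rw [he] at hb; exact notMem_empty b hb
    · obtain ⟨i, hi⟩ := hf ⟨j, by omega⟩
      have hival : (f i : ℕ) = j := by rw [hi]
      have hine : i ≠ Fin.last n₁ := by
        intro he; rw [he, hf0] at hival; simp at hival; omega
      obtain ⟨a, ha⟩ := Fin.exists_castSucc_eq.mpr hine
      exact ⟨a, by rw [Sa_oOf, ha, hival]⟩

lemma card_Icc_filter_le {k m : ℕ} (h : m ≤ k) :
    ((Finset.Icc 1 k).filter (fun j => j ≤ m)).card = m := by
  have : (Finset.Icc 1 k).filter (fun j => j ≤ m) = Finset.Icc 1 m := by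
    ext j; simp only [mem_filter, mem_Icc]; omega
  rw [this, Nat.card_Icc]; omega

lemma card_filter_Iset (hf : Function.Surjective f) (hf0 : f (Fin.last n₁) = 0)
    (hg : Function.Surjective g) (hg0 : g (Fin.last n₂) = 0)
    (p : Finset (Fin n₂) → Prop) [DecidablePred p] :
    ((Iset (oOf k f g)).filter p).card = ((Finset.Icc 1 k).filter (fun j => p (Vnat k g j))).card := by
  rw [Iset_oOf hf hf0 hg hg0, Finset.filter_image]
  exact card_image_of_injOn ((Vnat_injOn hg hg0).mono (by
    intro x hx; exact (mem_filter.1 hx).1))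

lemma mem_coe_Icc {j k : ℕ} : j ∈ (Finset.Icc 1 k : Finset ℕ) ↔ 1 ≤ j ∧ j ≤ k := mem_Icc

lemma L10 (hf : Function.Surjective f) (hf0 : f (Fin.last n₁) = 0)
    (hg : Function.Surjective g) (hg0 : g (Fin.last n₂) = 0) (a : Fin n₁) :
    ((Iset (oOf k f g)).filter (fun T => T ⊆ Sa (oOf k f g) a)).card = (f a.castSucc : ℕ) := by
  rw [card_filter_Iset hf hf0 hg hg0]
  have : ∀ j ∈ Finset.Icc 1 k,
      (Vnat k g j ⊆ Sa (oOf k f g) a) ↔ j ≤ (f a.castSucc : ℕ) := by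
    intro j hj
    rw [mem_Icc] at hj
    rw [Sa_oOf]
    exact Vnat_subset_iff hg hg0 hj.2 (f a.castSucc).is_le
  rw [filter_congr (by simpa using this)]
  exact card_Icc_filter_le (f a.castSucc).is_le

lemma L11 (hf : Function.Surjective f) (hf0 : f (Fin.last n₁) = 0)
    (hg : Function.Surjective g) (hg0 : g (Fin.last n₂) = 0) (b : Fin n₂) :
    ((Iset (oOf k f g)).filter (fun T => b ∉ T)).card = k - (g b.castSucc : ℕ) := by
  rw [card_filter_Iset hf hf0 hg hg0]
  have hgb := (g b.castSucc).is_le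
  have : ∀ j ∈ Finset.Icc 1 k, (b ∉ Vnat k g j) ↔ j ≤ k - (g b.castSucc : ℕ) := by
    intro j hj
    rw [mem_Vnat]
    omega
  rw [filter_congr (by simpa using this)]
  exact card_Icc_filter_le (by omega)

lemma L12 (hf : Function.Surjective f) (hf0 : f (Fin.last n₁) = 0)
    (hg : Function.Surjective g) (hg0 : g (Fin.last n₂) = 0) :
    (Iset (oOf k f g)).card = k := by
  rw [Iset_oOf hf hf0 hg hg0, card_image_of_injOn (Vnat_injOn hg hg0), Nat.card_Icc]; omega

end StepB

section General
variable {n₁ n₂ : ℕ} {o : Fin n₁ → Fin n₂ → Bool}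

lemma mem_Iset {T : Finset (Fin n₂)} : T ∈ Iset o ↔ T ≠ ∅ ∧ ∃ a, Sa o a = T := by
  simp [Iset]

lemma Iset_chain (hc : ChainCond o) {T T' : Finset (Fin n₂)}
    (hT : T ∈ Iset o) (hT' : T' ∈ Iset o) : T ⊆ T' ∨ T' ⊆ T := by
  obtain ⟨-, a, rfl⟩ := mem_Iset.1 hT
  obtain ⟨-, a', rfl⟩ := mem_Iset.1 hT'
  exact hc a a'

lemma G4 (hc : ChainCond o) (a : Fin n₁) (b : Fin n₂) :
    o a b = true ↔
      ((Iset o).filter (fun T => b ∉ T)).card < ((Iset o).filter (fun T => T ⊆ Sa o a)).card := by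
  constructor
  · intro h
    have hbS : b ∈ Sa o a := mem_Sa.2 h
    have hSm : Sa o a ∈ Iset o := mem_Iset.2 ⟨fun he => by simp [he] at hbS, a, rfl⟩
    apply card_lt_card
    constructor
    · intro T hT
      rw [mem_filter] at hT ⊢
      refine ⟨hT.1, ?_⟩
      rcases Iset_chain hc hT.1 hSm with h' | h'
      · exact h'
      · exact absurd (h' hbS) hT.2
    · intro hsub
      have h1 : Sa o a ∈ (Iset o).filter (fun T => T ⊆ Sa o a) :=
        mem_filter.2 ⟨hSm, subset_rfl⟩
      exact (mem_filter.1 (hsub h1)).2 hbS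
  · intro hlt
    by_contra h
    rw [Bool.not_eq_true] at h
    have hbS : b ∉ Sa o a := by simp [mem_Sa, h]
    have : (Iset o).filter (fun T => T ⊆ Sa o a) ⊆ (Iset o).filter (fun T => b ∉ T) := by
      intro T hT
      rw [mem_filter] at hT ⊢
      exact ⟨hT.1, fun hb => hbS (hT.2 hb)⟩
    exact absurd (card_le_card this) (not_le.2 hlt)

lemma countT_lt (hc : ChainCond o) {T T' : Finset (Fin n₂)}
    (hT' : T' ∈ Iset o) (hss : T ⊂ T') :
    ((Iset o).filter (fun U => U ⊆ T)).card < ((Iset o).filter (fun U => U ⊆ T')).card := by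
  apply card_lt_card
  constructor
  · intro U hU
    rw [mem_filter] at hU ⊢
    exact ⟨hU.1, hU.2.trans hss.subset⟩
  · intro hsub
    have h1 : T' ∈ (Iset o).filter (fun U => U ⊆ T') := mem_filter.2 ⟨hT', subset_rfl⟩
    exact hss.not_subset ((mem_filter.1 (hsub h1)).2)

lemma countT_mem {T : Finset (Fin n₂)} (hT : T ∈ Iset o) :
    ((Iset o).filter (fun U => U ⊆ T)).card ∈ Finset.Icc 1 (Iset o).card := by
  rw [mem_Icc]
  constructor
  · rw [Nat.one_le_iff_ne_zero, ← Nat.pos_iff_ne_zero, card_pos]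
    exact ⟨T, mem_filter.2 ⟨hT, subset_rfl⟩⟩
  · exact card_filter_le _ _

lemma countT_injOn (hc : ChainCond o) :
    Set.InjOn (fun T => ((Iset o).filter (fun U => U ⊆ T)).card) (Iset o) := by
  intro T hT T' hT' he
  simp only [mem_coe] at hT hT'
  by_contra hne
  rcases Iset_chain hc hT hT' with h | h
  · exact absurd he (Nat.ne_of_lt (countT_lt hc hT' (ssubset_of_subset_of_ne h hne)))
  · exact absurd he.symm (Nat.ne_of_lt (countT_lt hc hT (ssubset_of_subset_of_ne h (Ne.symm hne))))

lemma countT_surj (hc : ChainCond o) {j : ℕ} (hj : j ∈ Finset.Icc 1 (Iset o).card) :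
    ∃ T ∈ Iset o, ((Iset o).filter (fun U => U ⊆ T)).card = j := by
  have himg : (Iset o).image (fun T => ((Iset o).filter (fun U => U ⊆ T)).card)
      = Finset.Icc 1 (Iset o).card := by
    apply eq_of_subset_of_card_le
    · intro j hj
      obtain ⟨T, hT, rfl⟩ := mem_image.1 hj
      exact countT_mem hT
    · rw [Nat.card_Icc, card_image_of_injOn (countT_injOn hc)]
      omega
  rw [← himg] at hj
  obtain ⟨T, hT, hTj⟩ := mem_image.1 hj
  exact ⟨T, hT, hTj⟩

lemma exists_b (hc : ChainCond o) {T : Finset (Fin n₂)} (hT : T ∈ Iset o) :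
    ∃ b, ∀ T' ∈ Iset o, (b ∈ T' ↔ T ⊆ T') := by
  by_cases hM : ((Iset o).filter (fun U => U ⊂ T)).Nonempty
  · obtain ⟨U, hUm⟩ := Finset.exists_maximal hM
    have hU := hUm.prop
    have hUmax : ∀ x ∈ (Iset o).filter (fun U => U ⊂ T), ¬ U < x :=
      fun x hx hlt => absurd (hUm.2 hx hlt.le) (not_le_of_gt hlt)
    rw [mem_filter] at hU
    have hsubU : ∀ T' ∈ Iset o, T' ⊂ T → T' ⊆ U := by
      intro T' hT' hss
      rcases Iset_chain hc hT' hU.1 with h | h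
      · exact h
      · rcases eq_or_ne U T' with rfl | hne
        · exact subset_rfl
        · exact absurd (ssubset_of_subset_of_ne h hne)
            (hUmax T' (mem_filter.2 ⟨hT', hss⟩))
    obtain ⟨b, hbT, hbU⟩ := exists_of_ssubset hU.2
    refine ⟨b, fun T' hT' => ⟨?_, fun hsub => hsub hbT⟩⟩
    intro hbT'
    rcases Iset_chain hc hT' hT with h | h
    · rcases eq_or_ne T' T with rfl | hne
      · exact subset_rfl
      · exact absurd (hsubU T' hT' (ssubset_of_subset_of_ne h hne) hbT') hbU
    · exact h
  · have hTne : T.Nonempty := nonempty_iff_ne_empty.2 (mem_Iset.1 hT).1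
    obtain ⟨b, hb⟩ := hTne
    refine ⟨b, fun T' hT' => ⟨?_, fun hsub => hsub hb⟩⟩
    intro hbT'
    rcases Iset_chain hc hT' hT with h | h
    · rcases eq_or_ne T' T with rfl | hne
      · exact subset_rfl
      · exact absurd ⟨T', mem_filter.2 ⟨hT', ssubset_of_subset_of_ne h hne⟩⟩ hM
    · exact h

lemma cntg_of_T (hc : ChainCond o) {T : Finset (Fin n₂)} (hT : T ∈ Iset o) :
    ∃ b, ((Iset o).filter (fun T' => b ∉ T')).card
      = ((Iset o).filter (fun U => U ⊆ T)).card - 1 := by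
  obtain ⟨b, hb⟩ := exists_b hc hT
  refine ⟨b, ?_⟩
  have h1 : (Iset o).filter (fun T' => b ∉ T') = (Iset o).filter (fun T' => T' ⊂ T) := by
    apply filter_congr
    intro T' hT'
    rw [hb T' hT']
    constructor
    · intro hns
      rcases Iset_chain hc hT' hT with h | h
      · exact ssubset_of_subset_of_ne h (fun he => hns (he ▸ subset_rfl))
      · exact absurd h hns
    · intro hss hsub
      exact (hss.trans_subset hsub).false
  have h2 : (Iset o).filter (fun U => U ⊆ T) = insert T ((Iset o).filter (fun U => U ⊂ T)) := by
    ext U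
    simp only [mem_filter, mem_insert]
    constructor
    · rintro ⟨hU, hsub⟩
      rcases eq_or_ne U T with rfl | hne
      · exact Or.inl rfl
      · exact Or.inr ⟨hU, ssubset_of_subset_of_ne hsub hne⟩
    · rintro (rfl | ⟨hU, hss⟩)
      · exact ⟨hT, subset_rfl⟩
      · exact ⟨hU, hss.subset⟩
  have h3 : T ∉ (Iset o).filter (fun U => U ⊂ T) := by
    intro hm
    exact (mem_filter.1 hm).2.2 (mem_filter.1 hm).2.1
  rw [h1, h2, card_insert_of_notMem h3]
  omega

lemma Iset_card_le_left : (Iset o).card ≤ n₁ := by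
  calc (Iset o).card ≤ (univ.image (Sa o)).card := card_le_card (erase_subset _ _)
    _ ≤ (univ : Finset (Fin n₁)).card := card_image_le
    _ = n₁ := by simp

lemma Iset_card_le_right (hc : ChainCond o) : (Iset o).card ≤ n₂ := by
  have hinj : Set.InjOn Finset.card ((Iset o : Finset (Finset (Fin n₂))) : Set (Finset (Fin n₂))) := by
    intro T hT T' hT' he
    simp only [mem_coe] at hT hT'
    by_contra hne
    rcases Iset_chain hc hT hT' with h | h
    · exact absurd he (Nat.ne_of_lt (card_lt_card (ssubset_of_subset_of_ne h hne)))
    · exact absurd he.symm (Nat.ne_of_lt (card_lt_card (ssubset_of_subset_of_ne h (Ne.symm hne))))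
  have hsub : (Iset o).image Finset.card ⊆ Finset.Icc 1 n₂ := by
    intro j hj
    obtain ⟨T, hT, rfl⟩ := mem_image.1 hj
    rw [mem_Icc]
    constructor
    · rw [Nat.one_le_iff_ne_zero, ← Nat.pos_iff_ne_zero, card_pos]
      exact nonempty_iff_ne_empty.2 (mem_Iset.1 hT).1
    · calc T.card ≤ (univ : Finset (Fin n₂)).card := card_le_univ T
        _ = n₂ := by simp
  calc (Iset o).card = ((Iset o).image Finset.card).card := (card_image_of_injOn hinj).symm
    _ ≤ (Finset.Icc 1 n₂).card := card_le_card hsub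
    _ = n₂ := by rw [Nat.card_Icc]; omega

end General

section Bij
variable {n₁ n₂ : ℕ}

def Fmap (n₁ n₂ : ℕ) (x : Σ k : Fin (min n₁ n₂ + 1), PS n₁ k × PS n₂ k) :
    {o : Fin n₁ → Fin n₂ → Bool // ChainCond o} :=
  ⟨oOf (x.1 : ℕ) x.2.1.1 x.2.2.1, chainCond_oOf⟩

lemma Fmap_bijective (n₁ n₂ : ℕ) : Function.Bijective (Fmap n₁ n₂) := by
  constructor
  · rintro ⟨⟨k, hk⟩, ⟨f, hf, hf0⟩, ⟨g, hg, hg0⟩⟩ ⟨⟨l, hl⟩, ⟨f', hf', hf0'⟩, ⟨g', hg', hg0'⟩⟩ h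
    have ho : oOf k f g = oOf l f' g' := congrArg Subtype.val h
    have hkl : k = l := by
      have e1 : (Iset (oOf k f g)).card = k := L12 hf hf0 hg hg0
      have e2 : (Iset (oOf l f' g')).card = l := L12 hf' hf0' hg' hg0'
      rw [ho] at e1
      exact e1.symm.trans e2
    subst hkl
    have hfe : f = f' := by
      funext i
      induction i using Fin.lastCases with
      | last => rw [hf0, hf0']
      | cast a =>
        have e1 : ((Iset (oOf k f g)).filter
            (fun T => T ⊆ Sa (oOf k f g) a)).card = (f a.castSucc : ℕ) := L10 hf hf0 hg hg0 a
        have e2 : ((Iset (oOf k f' g')).filter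
            (fun T => T ⊆ Sa (oOf k f' g') a)).card = (f' a.castSucc : ℕ) := L10 hf' hf0' hg' hg0' a
        rw [ho] at e1
        exact Fin.ext (by rw [← e1, ← e2])
    have hge : g = g' := by
      funext i
      induction i using Fin.lastCases with
      | last => rw [hg0, hg0']
      | cast b =>
        have e1 : ((Iset (oOf k f g)).filter
            (fun T => b ∉ T)).card = k - (g b.castSucc : ℕ) := L11 hf hf0 hg hg0 b
        have e2 : ((Iset (oOf k f' g')).filter
            (fun T => b ∉ T)).card = k - (g' b.castSucc : ℕ) := L11 hf' hf0' hg' hg0' b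
        rw [ho] at e1
        have b1 : (g b.castSucc : ℕ) ≤ k := (g b.castSucc).is_le
        have b2 : (g' b.castSucc : ℕ) ≤ k := (g' b.castSucc).is_le
        have : (g b.castSucc : ℕ) = (g' b.castSucc : ℕ) := by omega
        exact Fin.ext this
    subst hfe
    subst hge
    rfl
  · rintro ⟨o, hc⟩
    set k' := (Iset o).card with hk'
    have hk1 : k' ≤ n₁ := Iset_card_le_left
    have hk2 : k' ≤ n₂ := Iset_card_le_right hc
    have hklt : k' < min n₁ n₂ + 1 := by omega
    set f₀ : Fin (n₁+1) → Fin (k'+1) :=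
      Fin.snoc (fun a => ⟨((Iset o).filter (fun T => T ⊆ Sa o a)).card,
        Nat.lt_succ_of_le (card_filter_le _ _)⟩) 0 with hf₀
    set g₀ : Fin (n₂+1) → Fin (k'+1) :=
      Fin.snoc (fun b => ⟨k' - ((Iset o).filter (fun T => b ∉ T)).card,
        by omega⟩) 0 with hg₀
    have hf₀s : Function.Surjective f₀ := by
      intro j
      rcases eq_or_ne j 0 with rfl | hj0
      · exact ⟨Fin.last n₁, by simp [hf₀, Fin.snoc_last]⟩
      · have hj1 : 1 ≤ (j : ℕ) := by
          rcases Nat.eq_zero_or_pos (j : ℕ) with h0 | h0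
          · exact absurd (Fin.ext h0) hj0
          · exact h0
        obtain ⟨T, hT, hcount⟩ := countT_surj hc (mem_Icc.2 ⟨hj1, j.is_le⟩)
        obtain ⟨-, a, ha⟩ := mem_Iset.1 hT
        rw [← ha] at hcount
        refine ⟨a.castSucc, ?_⟩
        rw [hf₀, Fin.snoc_castSucc]
        exact Fin.ext hcount
    have hg₀s : Function.Surjective g₀ := by
      intro j
      rcases eq_or_ne j 0 with rfl | hj0
      · exact ⟨Fin.last n₂, by simp [hg₀, Fin.snoc_last]⟩
      · have hj1 : 1 ≤ (j : ℕ) := by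
          rcases Nat.eq_zero_or_pos (j : ℕ) with h0 | h0
          · exact absurd (Fin.ext h0) hj0
          · exact h0
        have hjle : (j : ℕ) ≤ k' := j.is_le
        obtain ⟨T, hT, hcount⟩ := countT_surj hc
          (mem_Icc.2 ⟨by omega, by omega⟩ : k' - (j : ℕ) + 1 ∈ Finset.Icc 1 k')
        obtain ⟨b, hb⟩ := cntg_of_T hc hT
        rw [hcount] at hb
        refine ⟨b.castSucc, ?_⟩
        rw [hg₀, Fin.snoc_castSucc]
        refine Fin.ext ?_
        show k' - ((Iset o).filter (fun T' => b ∉ T')).card = (j : ℕ)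
        omega
    refine ⟨⟨⟨k', hklt⟩, ⟨f₀, hf₀s, by simp [hf₀]⟩, ⟨g₀, hg₀s, by simp [hg₀]⟩⟩, ?_⟩
    apply Subtype.ext
    show oOf k' f₀ g₀ = o
    funext a b
    show decide (k'+1 ≤ (f₀ a.castSucc : ℕ) + (g₀ b.castSucc : ℕ)) = o a b
    have hfv : (f₀ a.castSucc : ℕ) = ((Iset o).filter (fun T => T ⊆ Sa o a)).card := by
      rw [hf₀, Fin.snoc_castSucc]
    have hgv : (g₀ b.castSucc : ℕ) = k' - ((Iset o).filter (fun T => b ∉ T)).card := by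
      rw [hg₀, Fin.snoc_castSucc]
    have hca : ((Iset o).filter (fun T => T ⊆ Sa o a)).card ≤ k' := card_filter_le _ _
    have hcb : ((Iset o).filter (fun T => b ∉ T)).card ≤ k' := card_filter_le _ _
    have hiff := G4 hc a b
    rcases hob : o a b with _ | _
    · rw [hob] at hiff
      simp only [Bool.false_eq_true, false_iff, not_lt] at hiff
      apply decide_eq_false
      omega
    · rw [hob] at hiff
      simp only [true_iff] at hiff
      apply decide_eq_true
      omega

end Bij


section StepA
variable {n₁ n₂ : ℕ}

def fOf (o : Fin n₁ → Fin n₂ → Bool) : (Fin n₁ ⊕ Fin n₂) → (Fin n₁ ⊕ Fin n₂) → Bool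
  | Sum.inl a, Sum.inr b => o a b
  | Sum.inr b, Sum.inl a => !o a b
  | _, _ => false

lemma transGen_lt {α : Type*} {r : α → α → Prop} {φ : α → ℕ}
    (hstep : ∀ u v, r u v → φ v < φ u) {u v : α} (h : Relation.TransGen r u v) :
    φ v < φ u := by
  induction h with
  | single h => exact hstep _ _ h
  | tail _ h2 ih => exact lt_trans (hstep _ _ h2) ih

lemma isOrientation_fOf (o : Fin n₁ → Fin n₂ → Bool) :
    IsOrientation (completeBipartiteGraph (Fin n₁) (Fin n₂)) (fOf o) := by
  constructor
  · rintro (a | b) (a' | b') h <;> simp_all [fOf]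
  · rintro (a | b) (a' | b') h <;> simp_all [fOf]

lemma acyclic_fOf {o : Fin n₁ → Fin n₂ → Bool} (hc : ChainCond o) :
    OrientAcyclic (fOf o) := by
  classical
  set c : Fin n₁ → ℕ := fun a => (Sa o a).card with hcdef
  set φ : (Fin n₁ ⊕ Fin n₂) → ℕ := fun u =>
    match u with
    | Sum.inl a => 2 * c a + 2
    | Sum.inr b =>
      if h : (univ.filter (fun a => o a b = true)).Nonempty then
        2 * ((univ.filter (fun a => o a b = true)).image c).min' (h.image c) + 1
      else 2 * n₂ + 3 with hφdef
  have hstep : ∀ u v, fOf o u v = true → φ v < φ u := by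
    rintro (a | b) (a' | b') h
    · simp [fOf] at h
    · -- inl a → inr b'
      have hab : o a b' = true := h
      have hne : (univ.filter (fun x => o x b' = true)).Nonempty :=
        ⟨a, by simp [hab]⟩
      have hmin : ((univ.filter (fun x => o x b' = true)).image c).min' (hne.image c) ≤ c a := by
        apply min'_le
        exact mem_image_of_mem c (by simp [hab])
      simp only [hφdef, hne, dif_pos]
      omega
    · -- inr b → inl a'
      have hab : o a' b = false := by
        simp [fOf] at h; exact h
      have hca : c a' ≤ n₂ := by
        simpa [hcdef, Sa] using card_filter_le (univ : Finset (Fin n₂)) _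
      by_cases hne : (univ.filter (fun x => o x b = true)).Nonempty
      · obtain ⟨m, hm, hmeq⟩ := mem_image.1 (min'_mem _ (hne.image c))
        have hob : o m b = true := (mem_filter.1 hm).2
        have hlt : c a' < c m := by
          apply card_lt_card
          constructor
          · rcases hc a' m with hsub | hsub
            · exact hsub
            · exact absurd (hsub (mem_Sa.2 hob)) (by simp [mem_Sa, hab])
          · intro hsub
            exact absurd (hsub (mem_Sa.2 hob)) (by simp [mem_Sa, hab])
        simp only [hφdef, hne, dif_pos]
        omega
      · simp only [hφdef, hne, dif_neg, not_false_iff]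
        omega
    · simp [fOf] at h
  intro v hV
  exact lt_irrefl _ (transGen_lt hstep hV)

lemma chainCond_of_acyclic {f : (Fin n₁ ⊕ Fin n₂) → (Fin n₁ ⊕ Fin n₂) → Bool}
    (hor : IsOrientation (completeBipartiteGraph (Fin n₁) (Fin n₂)) f)
    (hac : OrientAcyclic f) :
    ChainCond (fun a b => f (Sum.inl a) (Sum.inr b)) := by
  by_contra hcc
  simp only [ChainCond, not_forall] at hcc
  obtain ⟨a, a', hna⟩ := hcc
  push_neg at hna
  obtain ⟨h1, h2⟩ := hna
  obtain ⟨b, hb1, hb2⟩ := not_subset.1 h1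
  obtain ⟨b', hb'1, hb'2⟩ := not_subset.1 h2
  rw [mem_Sa] at hb1 hb'1
  simp only [mem_Sa, Bool.not_eq_true] at hb2 hb'2
  have adj1 : (completeBipartiteGraph (Fin n₁) (Fin n₂)).Adj (Sum.inr b) (Sum.inl a') := by simp
  have adj2 : (completeBipartiteGraph (Fin n₁) (Fin n₂)).Adj (Sum.inr b') (Sum.inl a) := by simp
  have s1 : f (Sum.inl a) (Sum.inr b) = true := hb1
  have s2 : f (Sum.inr b) (Sum.inl a') = true := by
    rw [hor.1 _ _ adj1, hb2]; rfl
  have s3 : f (Sum.inl a') (Sum.inr b') = true := hb'1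
  have s4 : f (Sum.inr b') (Sum.inl a) = true := by
    rw [hor.1 _ _ adj2, hb'2]; rfl
  have cyc : Relation.TransGen (fun u v => f u v = true) (Sum.inl a) (Sum.inl a) :=
    Relation.TransGen.tail (Relation.TransGen.tail (Relation.TransGen.tail
      (Relation.TransGen.single s1) s2) s3) s4
  exact hac (Sum.inl a) cyc

lemma fOf_eq {f : (Fin n₁ ⊕ Fin n₂) → (Fin n₁ ⊕ Fin n₂) → Bool}
    (hor : IsOrientation (completeBipartiteGraph (Fin n₁) (Fin n₂)) f) :
    fOf (fun a b => f (Sum.inl a) (Sum.inr b)) = f := by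
  funext u v
  rcases u with a | b <;> rcases v with a' | b'
  · exact (hor.2 _ _ (by simp)).symm
  · rfl
  · rw [hor.1 _ _ (by simp)]; rfl
  · exact (hor.2 _ _ (by simp)).symm

lemma stepA :
    Nat.card {f : (Fin n₁ ⊕ Fin n₂) → (Fin n₁ ⊕ Fin n₂) → Bool //
        IsOrientation (completeBipartiteGraph (Fin n₁) (Fin n₂)) f ∧ OrientAcyclic f} =
      Nat.card {o : Fin n₁ → Fin n₂ → Bool // ChainCond o} := by
  apply Nat.card_eq_of_bijective
    (fun x => ⟨fun a b => x.1 (Sum.inl a) (Sum.inr b),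
      chainCond_of_acyclic x.2.1 x.2.2⟩)
  constructor
  · rintro ⟨f, hf⟩ ⟨f', hf'⟩ h
    have h' : (fun a b => f (Sum.inl a) (Sum.inr b)) = fun a b => f' (Sum.inl a) (Sum.inr b) := by
      simpa using congrArg Subtype.val h
    apply Subtype.ext
    show f = f'
    rw [← fOf_eq hf.1, ← fOf_eq hf'.1, h']
  · rintro ⟨o, ho⟩
    refine ⟨⟨fOf o, isOrientation_fOf o, acyclic_fOf ho⟩, ?_⟩
    apply Subtype.ext
    funext a b
    rfl

end StepA


def PartK (n k : ℕ) : Type :=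
  {P : Finpartition (Finset.univ : Finset (Fin n)) // P.parts.card = k}

lemma stirling2_eq (n k : ℕ) : stirling2 n k = Nat.card (PartK n k) := rfl


section StepC
variable {n k : ℕ}

instance kerDec (h : Fin (n+1) → Fin (k+1)) : DecidableRel (Setoid.ker h).r :=
  fun a b => decidable_of_iff (h a = h b) Iff.rfl

/-- fiber partition of `h` -/
def kerPart (h : Fin (n+1) → Fin (k+1)) : Finpartition (Finset.univ : Finset (Fin (n+1))) :=
  Finpartition.ofSetoid (Setoid.ker h)

lemma mem_kerPart_part {h : Fin (n+1) → Fin (k+1)} {a b : Fin (n+1)} :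
    b ∈ (kerPart h).part a ↔ h a = h b :=
  Finpartition.mem_part_ofSetoid_iff_rel

lemma kerPart_part_eq_iff {h : Fin (n+1) → Fin (k+1)} {a b : Fin (n+1)} :
    (kerPart h).part a = (kerPart h).part b ↔ h a = h b := by
  constructor
  · intro he
    exact mem_kerPart_part.1 (he ▸ (kerPart h).mem_part (mem_univ b))
  · intro he
    exact ((kerPart h).mem_part_iff_part_eq_part (mem_univ b) (mem_univ a)).1
      (mem_kerPart_part.2 he) |>.symm ▸ rfl

lemma mem_parts_iff {m : ℕ} (P : Finpartition (Finset.univ : Finset (Fin m)))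
    {T : Finset (Fin m)} : T ∈ P.parts ↔ ∃ a, P.part a = T := by
  constructor
  · intro hT
    obtain ⟨a, ha⟩ := P.nonempty_of_mem_parts hT
    exact ⟨a, P.part_eq_of_mem hT ha⟩
  · rintro ⟨a, rfl⟩
    exact P.part_mem.2 (mem_univ a)

lemma kerPart_parts_card {h : Fin (n+1) → Fin (k+1)} (hs : Function.Surjective h) :
    (kerPart h).parts.card = k + 1 := by
  have himg : (kerPart h).parts
      = univ.image (fun j : Fin (k+1) => (kerPart h).part (surjInv hs j)) := by
    ext T
    rw [mem_parts_iff]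
    constructor
    · rintro ⟨a, rfl⟩
      refine mem_image.2 ⟨h a, mem_univ _, ?_⟩
      rw [kerPart_part_eq_iff]
      exact surjInv_eq hs _
    · rintro hT
      obtain ⟨j, -, rfl⟩ := mem_image.1 hT
      exact ⟨_, rfl⟩
  rw [himg, card_image_of_injective _ ?_, card_univ, Fintype.card_fin]
  intro j j' he
  rw [kerPart_part_eq_iff, surjInv_eq hs, surjInv_eq hs] at he
  exact he

/-- canonical labelling -/
noncomputable def labOf (h : Fin (n+1) → Fin (k+1)) (T : Finset (Fin (n+1))) : Fin (k+1) :=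
  if hT : T ∈ (kerPart h).parts then h (T.min' ((kerPart h).nonempty_of_mem_parts hT)) else 0

lemma labOf_part (h : Fin (n+1) → Fin (k+1)) (a : Fin (n+1)) :
    labOf h ((kerPart h).part a) = h a := by
  have hmem : (kerPart h).part a ∈ (kerPart h).parts := (kerPart h).part_mem.2 (mem_univ a)
  rw [labOf, dif_pos hmem]
  exact (mem_kerPart_part.1 (Finset.min'_mem _ _)).symm

def Lab (P : PartK (n+1) (k+1)) : Type :=
  {ℓ : Finset (Fin (n+1)) → Fin (k+1) //
    Set.InjOn ℓ (P.1.parts : Set (Finset (Fin (n+1)))) ∧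
    (∀ T ∉ P.1.parts, ℓ T = 0) ∧ ℓ (P.1.part (Fin.last n)) = 0}

noncomputable def Cmap (x : PS n k) : Σ P : PartK (n+1) (k+1), Lab P :=
  ⟨⟨kerPart x.1, kerPart_parts_card x.2.1⟩,
    ⟨labOf x.1, by
      intro T hT T' hT' he
      simp only [mem_coe] at hT hT'
      obtain ⟨a, rfl⟩ := (mem_parts_iff _).1 hT
      obtain ⟨a', rfl⟩ := (mem_parts_iff _).1 hT'
      rw [labOf_part, labOf_part] at he
      rw [kerPart_part_eq_iff]; exact he,
     fun T hT => dif_neg hT,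
     by rw [labOf_part]; exact x.2.2⟩⟩

lemma Cmap_injective : Function.Injective (Cmap (n := n) (k := k)) := by
  intro x y he
  have hx : ∀ i, (Cmap x).2.1 ((Cmap x).1.1.part i) = x.1 i := fun i => labOf_part x.1 i
  have hy : ∀ i, (Cmap y).2.1 ((Cmap y).1.1.part i) = y.1 i := fun i => labOf_part y.1 i
  apply Subtype.ext
  funext i
  rw [← hx i, ← hy i, he]

lemma lab_surj_parts (P : PartK (n+1) (k+1)) (ℓ : Lab P) (j : Fin (k+1)) :
    ∃ T ∈ P.1.parts, ℓ.1 T = j := by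
  have hcard : (P.1.parts.image ℓ.1).card = Fintype.card (Fin (k+1)) := by
    rw [card_image_of_injOn ℓ.2.1, P.2, Fintype.card_fin]
  have huniv := Finset.eq_univ_of_card _ hcard
  have : j ∈ P.1.parts.image ℓ.1 := huniv ▸ mem_univ j
  obtain ⟨T, hT, hTj⟩ := mem_image.1 this
  exact ⟨T, hT, hTj⟩

lemma Cmap_surjective : Function.Surjective (Cmap (n := n) (k := k)) := by
  rintro ⟨⟨P, hPc⟩, ⟨ℓ, hinj, hout, h0⟩⟩
  set h : Fin (n+1) → Fin (k+1) := fun i => ℓ (P.part i) with hh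
  have hsurj : Function.Surjective h := by
    intro j
    obtain ⟨T, hT, hTj⟩ := lab_surj_parts ⟨P, hPc⟩ ⟨ℓ, hinj, hout, h0⟩ j
    obtain ⟨a, rfl⟩ := (mem_parts_iff _).1 hT
    exact ⟨a, hTj⟩
  have hlast : h (Fin.last n) = 0 := h0
  have hparteq : ∀ a, (kerPart h).part a = P.part a := by
    intro a
    ext b
    rw [mem_kerPart_part, hh]
    constructor
    · intro he
      have := hinj (P.part_mem.2 (mem_univ a)) (P.part_mem.2 (mem_univ b)) he
      rw [this]
      exact P.mem_part (mem_univ b)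
    · intro hb
      show ℓ (P.part a) = ℓ (P.part b)
      rw [P.part_eq_of_mem (P.part_mem.2 (mem_univ a)) hb]
  have hPeq : kerPart h = P := by
    apply Finpartition.ext
    ext T
    rw [mem_parts_iff, mem_parts_iff]
    exact ⟨fun ⟨a, ha⟩ => ⟨a, (hparteq a) ▸ ha⟩, fun ⟨a, ha⟩ => ⟨a, (hparteq a).symm ▸ ha⟩⟩
  refine ⟨⟨h, hsurj, hlast⟩, ?_⟩
  refine Sigma.ext (Subtype.ext hPeq) ?_
  have hpred : ∀ ℓ' : Finset (Fin (n+1)) → Fin (k+1),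
      (Set.InjOn ℓ' ((kerPart h).parts : Set (Finset (Fin (n+1)))) ∧
        (∀ T ∉ (kerPart h).parts, ℓ' T = 0) ∧ ℓ' ((kerPart h).part (Fin.last n)) = 0) ↔
      (Set.InjOn ℓ' (P.parts : Set (Finset (Fin (n+1)))) ∧
        (∀ T ∉ P.parts, ℓ' T = 0) ∧ ℓ' (P.part (Fin.last n)) = 0) := by
    intro ℓ'; rw [hPeq]
  apply (Subtype.heq_iff_coe_eq hpred).2
  show labOf h = ℓ
  funext T
  by_cases hT : T ∈ (kerPart h).parts
  · obtain ⟨a, rfl⟩ := (mem_parts_iff _).1 hT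
    rw [labOf_part, hh, hparteq]
  · rw [labOf, dif_neg hT]
    rw [hPeq] at hT
    exact (hout T hT).symm

end StepC

section Count
variable {n k : ℕ}

instance finpartition_finite (m : ℕ) : Finite (Finpartition (Finset.univ : Finset (Fin m))) :=
  Finite.of_injective Finpartition.parts (fun _ _ h => Finpartition.ext h)

instance (m j : ℕ) : Finite (PartK m j) := Subtype.finite

instance (P : PartK (n+1) (k+1)) : Finite (Lab P) := Subtype.finite

instance (m j : ℕ) : Finite (PS m j) := Subtype.finite

lemma card_Lab (P : PartK (n+1) (k+1)) : Nat.card (Lab P) = k.factorial := by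
  classical
  have hp0mem : P.1.part (Fin.last n) ∈ P.1.parts := P.1.part_mem.2 (mem_univ _)
  have hne : ∀ (ℓ : Lab P) (T : Finset (Fin (n+1))),
      T ∈ P.1.parts.erase (P.1.part (Fin.last n)) → ℓ.1 T ≠ 0 := by
    intro ℓ T hT h0
    rw [mem_erase] at hT
    exact hT.1 (ℓ.2.1 (mem_coe.2 hT.2) (mem_coe.2 hp0mem) (by rw [h0, ℓ.2.2.2]))
  have hbij : ∀ ℓ : Lab P, Function.Bijective
      (fun T : {T // T ∈ P.1.parts.erase (P.1.part (Fin.last n))} =>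
        (⟨ℓ.1 T.1, hne ℓ T.1 T.2⟩ : {j : Fin (k+1) // j ≠ 0})) := by
    intro ℓ
    constructor
    · intro T T' he
      have hv : ℓ.1 T.1 = ℓ.1 T'.1 := congrArg Subtype.val he
      have hT := mem_erase.1 T.2
      have hT' := mem_erase.1 T'.2
      exact Subtype.ext (ℓ.2.1 (mem_coe.2 hT.2) (mem_coe.2 hT'.2) hv)
    · rintro ⟨j, hj⟩
      obtain ⟨T, hT, hTj⟩ := lab_surj_parts P ℓ j
      have hTne : T ≠ P.1.part (Fin.last n) := by
        rintro rfl
        exact hj (hTj ▸ ℓ.2.2.2)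
      exact ⟨⟨T, mem_erase.2 ⟨hTne, hT⟩⟩, Subtype.ext hTj⟩
  have hEbij : Function.Bijective (fun ℓ : Lab P => Equiv.ofBijective _ (hbij ℓ)) := by
    constructor
    · intro ℓ₁ ℓ₂ he
      dsimp only at he
      apply Subtype.ext
      funext T
      by_cases hT : T ∈ P.1.parts.erase (P.1.part (Fin.last n))
      · have h2 : (Equiv.ofBijective _ (hbij ℓ₁)) ⟨T, hT⟩
            = (Equiv.ofBijective _ (hbij ℓ₂)) ⟨T, hT⟩ := by rw [he]
        exact congrArg Subtype.val h2
      · by_cases hT2 : T ∈ P.1.parts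
        · have hTp0 : T = P.1.part (Fin.last n) := by
            by_contra hne2
            exact hT (mem_erase.2 ⟨hne2, hT2⟩)
          rw [hTp0, ℓ₁.2.2.2, ℓ₂.2.2.2]
        · rw [ℓ₁.2.2.1 T hT2, ℓ₂.2.2.1 T hT2]
    · intro σ
      refine ⟨⟨fun T => if hT : T ∈ P.1.parts.erase (P.1.part (Fin.last n))
        then (σ ⟨T, hT⟩).1 else 0, ?_, ?_, ?_⟩, ?_⟩
      · intro T hT T' hT' he
        simp only [mem_coe] at hT hT'
        by_cases h1 : T ∈ P.1.parts.erase (P.1.part (Fin.last n)) <;>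
          by_cases h2 : T' ∈ P.1.parts.erase (P.1.part (Fin.last n))
        · simp only [dif_pos h1, dif_pos h2] at he
          have := σ.injective (Subtype.ext he)
          exact congrArg Subtype.val this
        · simp only [dif_pos h1, dif_neg h2] at he
          exact absurd he (σ ⟨T, h1⟩).2
        · simp only [dif_neg h1, dif_pos h2] at he
          exact absurd he.symm (σ ⟨T', h2⟩).2
        · have e1 : T = P.1.part (Fin.last n) := by
            by_contra hne2; exact h1 (mem_erase.2 ⟨hne2, hT⟩)
          have e2 : T' = P.1.part (Fin.last n) := by
            by_contra hne2; exact h2 (mem_erase.2 ⟨hne2, hT'⟩)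
          rw [e1, e2]
      · intro T hT
        exact dif_neg (fun hm => hT (mem_erase.1 hm).2)
      · exact dif_neg (fun hm => (mem_erase.1 hm).1 rfl)
      · apply Equiv.ext
        intro T
        apply Subtype.ext
        show (if hT : T.1 ∈ _ then (σ ⟨T.1, hT⟩).1 else 0) = (σ T).1
        rw [dif_pos T.2]
  have hcA : Fintype.card {T // T ∈ P.1.parts.erase (P.1.part (Fin.last n))} = k := by
    rw [Fintype.card_coe, card_erase_of_mem hp0mem, P.2]
    omega
  have hcB : Fintype.card {j : Fin (k+1) // j ≠ 0} = k := by
    rw [Fintype.card_subtype]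
    have : univ.filter (fun j : Fin (k+1) => j ≠ 0) = univ.erase 0 := by
      ext j; simp [mem_erase, and_comm]
    rw [this, card_erase_of_mem (mem_univ _), card_univ, Fintype.card_fin]
    omega
  rw [Nat.card_eq_of_bijective _ hEbij, Nat.card_eq_fintype_card,
    Fintype.card_equiv (Fintype.equivOfCardEq (hcA.trans hcB.symm)), hcA]

lemma stepC (n k : ℕ) : Nat.card (PS n k) = k.factorial * stirling2 (n+1) (k+1) := by
  classical
  rw [Nat.card_eq_of_bijective _ ⟨Cmap_injective, Cmap_surjective⟩]
  letI : Fintype (PartK (n+1) (k+1)) := Fintype.ofFinite _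
  letI : ∀ P : PartK (n+1) (k+1), Fintype (Lab P) := fun _ => Fintype.ofFinite _
  rw [Nat.card_eq_fintype_card, Fintype.card_sigma]
  rw [Finset.sum_congr rfl (fun P _ => by
    rw [← Nat.card_eq_fintype_card, card_Lab P]), Finset.sum_const, smul_eq_mul,
    stirling2_eq, Nat.card_eq_fintype_card, card_univ, Nat.mul_comm]

end Count


lemma stirling2_succ_zero (n : ℕ) : stirling2 (n+1) 0 = 0 := by
  have : IsEmpty {P : Finpartition (Finset.univ : Finset (Fin (n+1))) // P.parts.card = 0} := by
    constructor
    rintro ⟨P, hP⟩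
    have hparts : P.parts = ∅ := card_eq_zero.1 hP
    have hsup := P.sup_parts
    rw [hparts, Finset.sup_empty] at hsup
    have : (0 : Fin (n+1)) ∈ (⊥ : Finset (Fin (n+1))) := hsup ▸ mem_univ 0
    simp at this
  exact Nat.card_of_isEmpty

/-- The number of acyclic orientations of the complete bipartite graph `K_{n₁,n₂}` is
`∑_{k=1}^{min(n₁,n₂)+1} ((k−1)!)² S(n₁+1,k) S(n₂+1,k)`. -/
theorem acyclicOrientations_completeBipartite (n₁ n₂ : ℕ) (h₁ : 1 ≤ n₁) (h₂ : 1 ≤ n₂) :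
    numAcyclicOrientations (completeBipartiteGraph (Fin n₁) (Fin n₂)) =
      ∑ k ∈ Finset.Icc 1 (min n₁ n₂ + 1),
        (Nat.factorial (k - 1)) ^ 2 * stirling2 (n₁ + 1) k * stirling2 (n₂ + 1) k := by
  classical
  set m := min n₁ n₂ with hm
  set G : ℕ → ℕ := fun j =>
    (Nat.factorial (j - 1)) ^ 2 * stirling2 (n₁ + 1) j * stirling2 (n₂ + 1) j with hG
  show Nat.card {f : (Fin n₁ ⊕ Fin n₂) → (Fin n₁ ⊕ Fin n₂) → Bool //
      IsOrientation (completeBipartiteGraph (Fin n₁) (Fin n₂)) f ∧ OrientAcyclic f}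
    = ∑ k ∈ Finset.Icc 1 (m + 1), G k
  rw [stepA, ← Nat.card_eq_of_bijective _ (Fmap_bijective n₁ n₂)]
  letI : ∀ i : ℕ, Fintype (PS n₁ i) := fun _ => Fintype.ofFinite _
  letI : ∀ i : ℕ, Fintype (PS n₂ i) := fun _ => Fintype.ofFinite _
  rw [Nat.card_eq_fintype_card, Fintype.card_sigma]
  have hterm : ∀ k : Fin (m+1), Fintype.card (PS n₁ (k : ℕ) × PS n₂ (k : ℕ)) = G ((k : ℕ) + 1) := by
    intro k
    rw [Fintype.card_prod, ← Nat.card_eq_fintype_card, ← Nat.card_eq_fintype_card,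
      stepC, stepC, hG]
    simp only [Nat.add_sub_cancel]
    ring
  rw [Finset.sum_congr rfl (fun k _ => hterm k)]
  rw [Fin.sum_univ_eq_sum_range (fun i => G (i + 1)) (m + 1)]
  have h1 : ∑ i ∈ Finset.range (m + 2), G i
      = (∑ i ∈ Finset.range (m + 1), G (i + 1)) + G 0 := Finset.sum_range_succ' G (m + 1)
  have h2 : Finset.range (m + 2) = insert 0 (Finset.Icc 1 (m + 1)) := by
    ext x
    simp only [Finset.mem_range, Finset.mem_insert, Finset.mem_Icc]
    omega
  have h3 : ∑ i ∈ Finset.range (m + 2), G i = G 0 + ∑ k ∈ Finset.Icc 1 (m + 1), G k := by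
    rw [h2, Finset.sum_insert (by simp)]
  omega
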